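/- arXiv:2112.14960 — 4 statements merged into one kernel-verified Lean document; each statement's English description precedes it below -/
import Mathlib

section
/- Let n > m ≥ 2. There exists a 2-edge-coloring of K_{N,N} with N = n+m−2 containing neither a red C_{2m} nor a blue C_{2n}. Hence br(C_{2n}, C_{2m}) ≥ m + n − 1. -/
def hasCycleLength {V : Type*} (G : SimpleGraph V) (l : ℕ) : Prop :=
  ∃ (v : V) (p : G.Walk v v), p.IsCycle ∧ p.length = l

open SimpleGraph

private lemma getD_support_eq_getVert {V : Type*} {G : SimpleGraph V} {u v : V}
    (p : G.Walk u v) (x : V) : ∀ i, i ≤ p.length → p.support.getD i x = p.getVert i := by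
  induction p with
  | nil =>
      intro i hi
      simp only [Walk.length_nil, Nat.le_zero] at hi
      subst hi
      simp [Walk.getVert]
  | cons h q ih =>
      intro i hi
      cases i with
      | zero => simp [Walk.getVert]
      | succ j =>
        simp only [Walk.support_cons, List.getD_cons_succ, Walk.getVert_cons_succ]
        exact ih j (by simpa using hi)

private lemma cycle_getVert_injOn {V : Type*} {G : SimpleGraph V} {v : V}
    {p : G.Walk v v} (hp : p.IsCycle) {i j : ℕ}
    (hi1 : 1 ≤ i) (hi2 : i ≤ p.length) (hj1 : 1 ≤ j) (hj2 : j ≤ p.length)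
    (h : p.getVert i = p.getVert j) : i = j := by
  classical
  have hnd : p.support.tail.Nodup := ((Walk.isCycle_def p).mp hp).2.2
  have hlen : p.support.tail.length = p.length := by
    have h1 := p.length_support
    rw [List.length_tail, h1]
    omega
  have key : ∀ k, 1 ≤ k → k ≤ p.length → p.support.tail.getD (k - 1) v = p.getVert k := by
    intro k hk1 hk2
    have := getD_support_eq_getVert p v k hk2
    rw [p.support_eq_cons] at this
    obtain ⟨k', rfl⟩ := Nat.exists_eq_succ_of_ne_zero (show k ≠ 0 by omega)
    simpa using this
  have hi' : i - 1 < p.support.tail.length := by omega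
  have hj' : j - 1 < p.support.tail.length := by omega
  have hgi : p.support.tail[i-1] = p.getVert i := by
    rw [← key i hi1 hi2, List.getD_eq_getElem _ _ hi']
  have hgj : p.support.tail[j-1] = p.getVert j := by
    rw [← key j hj1 hj2, List.getD_eq_getElem _ _ hj']
  have : i - 1 = j - 1 := by
    rw [← List.Nodup.getElem_inj_iff hnd (hi := hi') (hj := hj'), hgi, hgj]
    exact h
  omega

private lemma no_long_cycle {α β : Type*} {G : SimpleGraph (α ⊕ β)}
    (hG : G ≤ completeBipartiteGraph α β) (S : Finset β) {k : ℕ} (hk : S.card < k)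
    (hS : ∀ u y, G.Adj u (Sum.inr y) → y ∈ S) : ¬ hasCycleLength G (2 * k) := by
  classical
  rintro ⟨v, p, hp, hl⟩
  have h3 : 3 ≤ p.length := hp.three_le_length
  have hk2 : 2 ≤ k := by omega
  have hchoice : ∀ j : Fin k, ∃ y ∈ S,
      p.getVert (2*j) = Sum.inr y ∨ p.getVert (2*j+1) = Sum.inr y := by
    intro j
    have hlt : 2*(j:ℕ) < p.length := by have := j.isLt; omega
    have hadj := p.adj_getVert_succ hlt
    have hbip := hG hadj
    cases h1 : p.getVert (2*(j:ℕ)) with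
    | inl a =>
        cases h2 : p.getVert (2*(j:ℕ)+1) with
        | inl a' => rw [h1, h2] at hbip; simp at hbip
        | inr b =>
            rw [h1, h2] at hadj
            exact ⟨b, hS _ b hadj, Or.inr rfl⟩
    | inr b =>
        rw [h1] at hadj
        exact ⟨b, hS _ b hadj.symm, Or.inl rfl⟩
  choose f hfS hf using hchoice
  have hidx : ∀ j : Fin k, ∃ i, 1 ≤ i ∧ i ≤ p.length ∧
      p.getVert i = Sum.inr (f j) ∧ (i % p.length) / 2 = (j : ℕ) := by
    intro j
    rcases hf j with h1 | h2
    · by_cases hj0 : (j : ℕ) = 0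
      · refine ⟨p.length, by omega, le_refl _, ?_, by simp [Nat.mod_self, hj0]⟩
        rw [p.getVert_length, ← p.getVert_zero]
        simpa [hj0] using h1
      · refine ⟨2*(j:ℕ), by omega, ?_, h1, ?_⟩
        · have := j.isLt; omega
        · have hlt : 2*(j:ℕ) < p.length := by have := j.isLt; omega
          rw [Nat.mod_eq_of_lt hlt]; omega
    · refine ⟨2*(j:ℕ)+1, by omega, ?_, h2, ?_⟩
      · have := j.isLt; omega
      · have hlt : 2*(j:ℕ)+1 ≤ p.length := by have := j.isLt; omega
        rcases eq_or_lt_of_le hlt with he | hlt'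
        · have := j.isLt; omega
        · rw [Nat.mod_eq_of_lt hlt']; omega
  choose e he1 he2 he3 he4 using hidx
  have hfinj : Function.Injective f := by
    intro j1 j2 hf12
    have : p.getVert (e j1) = p.getVert (e j2) := by rw [he3 j1, he3 j2, hf12]
    have heq := cycle_getVert_injOn hp (he1 j1) (he2 j1) (he1 j2) (he2 j2) this
    have hmm : e j1 % p.length = e j2 % p.length := by rw [heq]
    have h41 := he4 j1; have h42 := he4 j2
    apply Fin.ext; omega
  have : (Finset.univ : Finset (Fin k)).card ≤ S.card :=
    Finset.card_le_card_of_injOn f (fun j _ => hfS j) (hfinj.injOn)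
  simp at this
  omega

private lemma construction (n m N : ℕ) (hm : 2 ≤ m) (hmn : m < n) (hN : N ≤ n + m - 2) :
    ∃ red : SimpleGraph (Fin N ⊕ Fin N),
      red ≤ completeBipartiteGraph (Fin N) (Fin N) ∧
      ¬ hasCycleLength red (2 * m) ∧
      ¬ hasCycleLength (completeBipartiteGraph (Fin N) (Fin N) \ red) (2 * n) := by
  classical
  set red : SimpleGraph (Fin N ⊕ Fin N) :=
    SimpleGraph.fromRel (fun u v => ∃ a b : Fin N,
      u = Sum.inl a ∧ v = Sum.inr b ∧ (b : ℕ) < m - 1) with hred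
  have hle : red ≤ completeBipartiteGraph (Fin N) (Fin N) := by
    intro u v h
    rw [hred, SimpleGraph.fromRel_adj] at h
    rcases h.2 with ⟨a, b, rfl, rfl, _⟩ | ⟨a, b, rfl, rfl, _⟩ <;> simp
  refine ⟨red, hle, ?_, ?_⟩
  · apply no_long_cycle hle (Finset.univ.filter (fun y : Fin N => (y : ℕ) < m - 1))
    · have : (Finset.univ.filter (fun y : Fin N => (y : ℕ) < m - 1)).card ≤ m - 1 := by
        have := Finset.card_le_card_of_injOn (fun y : Fin N => (y : ℕ))
          (s := Finset.univ.filter (fun y : Fin N => (y : ℕ) < m - 1))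
          (t := Finset.range (m - 1))
          (by intro y hy; simp at hy ⊢; exact hy)
          (fun y _ z _ h => Fin.ext h)
        simpa using this
      omega
    · intro u y h
      rw [hred, SimpleGraph.fromRel_adj] at h
      rcases h.2 with ⟨a, b, _, hb, hlt⟩ | ⟨a, b, hb, _, _⟩
      · simp [Sum.inr.injEq] at hb; simp [hb, hlt]
      · simp at hb
  · apply no_long_cycle (sdiff_le) (Finset.univ.filter (fun y : Fin N => m - 1 ≤ (y : ℕ)))
    · have : (Finset.univ.filter (fun y : Fin N => m - 1 ≤ (y : ℕ))).card ≤ n - 1 := by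
        have := Finset.card_le_card_of_injOn (fun y : Fin N => (y : ℕ) - (m - 1))
          (s := Finset.univ.filter (fun y : Fin N => m - 1 ≤ (y : ℕ)))
          (t := Finset.range (n - 1))
          (by intro y hy; simp at hy ⊢; have := y.isLt; omega)
          (by intro y hy z hz h; simp at hy hz h; apply Fin.ext; omega)
        simpa using this
      omega
    · intro u y h
      rw [SimpleGraph.sdiff_adj] at h
      obtain ⟨hb, hnr⟩ := h
      obtain ⟨a, rfl⟩ : ∃ a : Fin N, u = Sum.inl a := by
        cases u with
        | inl a => exact ⟨a, rfl⟩
        | inr b => simp at hb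
      simp only [Finset.mem_filter, Finset.mem_univ, true_and]
      by_contra hlt
      push_neg at hlt
      exact hnr (by
        rw [hred, SimpleGraph.fromRel_adj]
        exact ⟨by simp, Or.inl ⟨a, y, rfl, rfl, hlt⟩⟩)

/-- For `n > m ≥ 2` there is a red/blue coloring of `K_{N,N}` with `N = n + m - 2`
having neither a red `C_{2m}` nor a blue `C_{2n}`; hence `br(C_{2n}, C_{2m}) ≥ m + n - 1`. -/
theorem bipartite_ramsey_cycles_lower_offdiag (n m : ℕ) (hm : 2 ≤ m) (hmn : m < n) :
    (∃ red : SimpleGraph (Fin (n + m - 2) ⊕ Fin (n + m - 2)),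
      red ≤ completeBipartiteGraph (Fin (n + m - 2)) (Fin (n + m - 2)) ∧
      ¬ hasCycleLength red (2 * m) ∧
      ¬ hasCycleLength
          (completeBipartiteGraph (Fin (n + m - 2)) (Fin (n + m - 2)) \ red) (2 * n)) ∧
    (∀ N : ℕ,
      (∀ red : SimpleGraph (Fin N ⊕ Fin N),
        red ≤ completeBipartiteGraph (Fin N) (Fin N) →
          hasCycleLength red (2 * m) ∨
          hasCycleLength (completeBipartiteGraph (Fin N) (Fin N) \ red) (2 * n)) →
      m + n - 1 ≤ N) := by
  constructor
  · exact construction n m (n + m - 2) hm hmn le_rfl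
  · intro N hN
    by_contra hc
    push_neg at hc
    obtain ⟨red, h1, h2, h3⟩ := construction n m N hm hmn (by omega)
    rcases hN red h1 with h | h
    · exact h2 h
    · exact h3 h
end

section
/- Let A_1, B_1, A_2, B_2 be pairwise disjoint vertex sets in a graph G such that (A_1, B_1) and (A_2, B_2) are complete bipartite subgraphs of G. If G contains an edge between A_1 and A_2 and an edge between B_1 and B_2, then G contains cycles of every even length from 6 to 2(min{|A_1|,|B_1|} + min{|A_2|,|B_2|}). -/
open SimpleGraph

/-- A zigzag path of length `2k+1` in a complete bipartite pair `(A, B)`,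
from a prescribed `a ∈ A` to a prescribed `b ∈ B`. -/
lemma zigzag_path {V : Type*} [DecidableEq V] (G : SimpleGraph V) :
    ∀ (k : ℕ) (A B : Finset V), Disjoint A B → (∀ a ∈ A, ∀ b ∈ B, G.Adj a b) →
    ∀ a, a ∈ A → ∀ b, b ∈ B → k + 1 ≤ A.card → k + 1 ≤ B.card →
    ∃ p : G.Walk a b, p.IsPath ∧ p.length = 2 * k + 1 ∧ ∀ v ∈ p.support, v ∈ A ∨ v ∈ B := by
  intro k
  induction k with
  | zero =>
    intro A B hd hcb a ha b hb _ _
    have hadj : G.Adj a b := hcb a ha b hb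
    refine ⟨Walk.cons hadj Walk.nil, ?_, by simp, ?_⟩
    · rw [Walk.isPath_def]
      simp [hadj.ne]
    · intro v hv
      simp only [Walk.support_cons, Walk.support_nil, List.mem_cons, List.mem_singleton] at hv
      rcases hv with h | h | h
      · exact Or.inl (h ▸ ha)
      · exact Or.inr (h ▸ hb)
      · simp at h
  | succ k ih =>
    intro A B hd hcb a ha b hb hA hB
    -- pick b' ∈ B \ {b} and a' ∈ A \ {a}
    have hBe : 0 < (B.erase b).card := by
      rw [Finset.card_erase_of_mem hb]; omega
    obtain ⟨b', hb'⟩ := Finset.card_pos.mp hBe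
    have hb'B : b' ∈ B := Finset.mem_of_mem_erase hb'
    have hb'ne : b' ≠ b := Finset.ne_of_mem_erase hb'
    have hAe : 0 < (A.erase a).card := by
      rw [Finset.card_erase_of_mem ha]; omega
    obtain ⟨a', ha'⟩ := Finset.card_pos.mp hAe
    have ha'A : a' ∈ A := Finset.mem_of_mem_erase ha'
    have ha'ne : a' ≠ a := Finset.ne_of_mem_erase ha'
    -- recursive zigzag from a' to b inside (A.erase a, B.erase b')
    have hd' : Disjoint (A.erase a) (B.erase b') :=
      Disjoint.mono (Finset.erase_subset _ _) (Finset.erase_subset _ _) hd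
    have hcb' : ∀ x ∈ A.erase a, ∀ y ∈ B.erase b', G.Adj x y := fun x hx y hy =>
      hcb x (Finset.mem_of_mem_erase hx) y (Finset.mem_of_mem_erase hy)
    have hbB' : b ∈ B.erase b' := Finset.mem_erase.mpr ⟨fun h => hb'ne h.symm, hb⟩
    obtain ⟨p, hp, hlen, hsup⟩ := ih (A.erase a) (B.erase b') hd' hcb' a' ha' b hbB'
      (by rw [Finset.card_erase_of_mem ha]; omega)
      (by rw [Finset.card_erase_of_mem hb'B]; omega)
    have hab' : G.Adj a b' := hcb a ha b' hb'B
    have hb'a' : G.Adj b' a' := (hcb a' ha'A b' hb'B).symm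
    refine ⟨Walk.cons hab' (Walk.cons hb'a' p), ?_, ?_, ?_⟩
    · rw [Walk.isPath_def]
      simp only [Walk.support_cons, List.nodup_cons]
      have hdleft := Finset.disjoint_left.mp hd
      refine ⟨?_, ?_, (Walk.isPath_def p).mp hp⟩
      · simp only [List.mem_cons, not_or]
        refine ⟨fun h => hdleft ha (h ▸ hb'B), fun h => ?_⟩
        rcases hsup a h with h' | h'
        · exact (Finset.mem_erase.mp h').1 rfl
        · exact hdleft ha (Finset.mem_of_mem_erase h')
      · intro h
        rcases hsup b' h with h' | h'
        · exact hdleft (Finset.mem_of_mem_erase h') hb'B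
        · exact (Finset.mem_erase.mp h').1 rfl
    · simp only [Walk.length_cons, hlen]; omega
    · intro v hv
      simp only [Walk.support_cons, List.mem_cons] at hv
      rcases hv with h | h | h
      · exact Or.inl (h ▸ ha)
      · exact Or.inr (h ▸ hb'B)
      · rcases hsup v h with h' | h'
        · exact Or.inl (Finset.mem_of_mem_erase h')
        · exact Or.inr (Finset.mem_of_mem_erase h')

/-- If `(A₁, B₁)` and `(A₂, B₂)` are complete bipartite subgraphs of `G` on pairwise
disjoint vertex sets, and there is an edge between `A₁` and `A₂` and an edge between
`B₁` and `B₂`, then `G` contains cycles of every even length from `6` to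
`2(min(|A₁|,|B₁|) + min(|A₂|,|B₂|))`. -/
theorem cycles_from_two_complete_bipartite_graphs {V : Type*} [DecidableEq V]
    (G : SimpleGraph V) (A1 B1 A2 B2 : Finset V)
    (hA1B1 : Disjoint A1 B1) (hA1A2 : Disjoint A1 A2) (hA1B2 : Disjoint A1 B2)
    (hB1A2 : Disjoint B1 A2) (hB1B2 : Disjoint B1 B2) (hA2B2 : Disjoint A2 B2)
    (hcb1 : ∀ a ∈ A1, ∀ b ∈ B1, G.Adj a b)
    (hcb2 : ∀ a ∈ A2, ∀ b ∈ B2, G.Adj a b)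
    (heA : ∃ a ∈ A1, ∃ a' ∈ A2, G.Adj a a')
    (heB : ∃ b ∈ B1, ∃ b' ∈ B2, G.Adj b b') :
    ∀ l : ℕ, Even l → 6 ≤ l → l ≤ 2 * (min A1.card B1.card + min A2.card B2.card) →
      hasCycleLength G l := by
  intro l hEven hl6 hlub
  obtain ⟨a, haA1, a', ha'A2, haa'⟩ := heA
  obtain ⟨b, hbB1, b', hb'B2, hbb'⟩ := heB
  obtain ⟨k, hk⟩ := hEven
  have hk' : l = 2 * k := by omega
  set m1 := min A1.card B1.card with hm1
  set m2 := min A2.card B2.card with hm2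
  have hm1pos : 1 ≤ m1 := le_min (Finset.card_pos.mpr ⟨a, haA1⟩) (Finset.card_pos.mpr ⟨b, hbB1⟩)
  have hm2pos : 1 ≤ m2 := le_min (Finset.card_pos.mpr ⟨a', ha'A2⟩) (Finset.card_pos.mpr ⟨b', hb'B2⟩)
  have hkub : k ≤ m1 + m2 := by omega
  have hk3 : 3 ≤ k := by omega
  -- choose j1, j2 with j1 + j2 = k - 2, j1 + 1 ≤ m1, j2 + 1 ≤ m2
  set j1 := min (k - 2) (m1 - 1) with hj1
  set j2 := k - 2 - j1 with hj2
  have hj1m : j1 + 1 ≤ m1 := by omega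
  have hj2m : j2 + 1 ≤ m2 := by omega
  have hsum : j1 + j2 = k - 2 := by omega
  -- zigzag path in side 1: from b ∈ B1 to a ∈ A1
  obtain ⟨p1, hp1path, hp1len, hp1sup⟩ := zigzag_path G j1 B1 A1 hA1B1.symm
    (fun x hx y hy => (hcb1 y hy x hx).symm) b hbB1 a haA1
    (by omega) (by omega)
  -- zigzag path in side 2: from a' ∈ A2 to b' ∈ B2
  obtain ⟨p2, hp2path, hp2len, hp2sup⟩ := zigzag_path G j2 A2 B2 hA2B2 hcb2
    a' ha'A2 b' hb'B2 (by omega) (by omega)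
  -- glue: a → a' →(p2)→ b' → b →(p1)→ a
  have hb'b : G.Adj b' b := hbb'.symm
  set P : G.Walk a' a := p2.append (Walk.cons hb'b p1) with hP
  have hPsup : P.support = p2.support ++ p1.support := by
    rw [hP, Walk.support_append, Walk.support_cons, List.tail_cons]
  have hPpath : P.IsPath := by
    rw [Walk.isPath_def, hPsup, List.nodup_append]
    refine ⟨(Walk.isPath_def p2).mp hp2path, (Walk.isPath_def p1).mp hp1path, ?_⟩
    intro v hv2 w hv1 hvw; subst hvw
    rcases hp2sup v hv2 with h2 | h2 <;> rcases hp1sup v hv1 with h1 | h1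
    · exact Finset.disjoint_left.mp hB1A2 h1 h2
    · exact Finset.disjoint_left.mp hA1A2 h1 h2
    · exact Finset.disjoint_left.mp hB1B2 h1 h2
    · exact Finset.disjoint_left.mp hA1B2 h1 h2
  have hPedge : ¬ s(a, a') ∈ P.edges := by
    rw [hP, Walk.edges_append, Walk.edges_cons, List.mem_append, List.mem_cons]
    rintro (h | h | h)
    · have : a ∈ p2.support := Walk.fst_mem_support_of_mem_edges p2 h
      rcases hp2sup a this with h' | h'
      · exact Finset.disjoint_left.mp hA1A2 haA1 h'
      · exact Finset.disjoint_left.mp hA1B2 haA1 h'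
    · rw [Sym2.eq_iff] at h
      rcases h with ⟨h1, _⟩ | ⟨h1, _⟩
      · exact Finset.disjoint_left.mp hA1B2 haA1 (h1 ▸ hb'B2)
      · exact Finset.disjoint_left.mp hA1B1 haA1 (h1 ▸ hbB1)
    · have : a' ∈ p1.support := Walk.snd_mem_support_of_mem_edges p1 h
      rcases hp1sup a' this with h' | h'
      · exact Finset.disjoint_left.mp hB1A2 h' ha'A2
      · exact Finset.disjoint_left.mp hA1A2 h' ha'A2
  refine ⟨a, Walk.cons haa' P, ?_, ?_⟩
  · exact (Walk.cons_isCycle_iff P haa').mpr ⟨hPpath, hPedge⟩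
  · rw [Walk.length_cons, hP, Walk.length_append, Walk.length_cons, hp1len, hp2len]
    omega
end

section
/- Let G be a bipartite graph with parts X, Y where |X| = |Y| ≥ n ≥ 4. If every vertex y ∈ Y satisfies deg(y) ≥ |X| − 1 and G contains no cycle C_{2n}, then G contains a complete bipartite subgraph K_{n−1, n−1}. -/
lemma walk_aux {V : Type*} (G : SimpleGraph V) (g : ℕ → V) :
    ∀ b, (∀ i < b, G.Adj (g i) (g (i+1))) →
    ∃ w : G.Walk (g 0) (g b), w.support = (List.range (b+1)).map g ∧
      w.length = b ∧ w.edges = (List.range b).map (fun i => s(g i, g (i+1))) := by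
  intro b
  induction b with
  | zero => intro _; exact ⟨SimpleGraph.Walk.nil, by simp [List.range_succ], by simp, by simp⟩
  | succ b ih =>
    intro h
    obtain ⟨w, hs, hl, he⟩ := ih (fun i hi => h i (by omega))
    refine ⟨w.concat (h b (by omega)), ?_, ?_, ?_⟩
    · rw [SimpleGraph.Walk.support_concat, hs, List.range_succ (n := b+1)]
      simp
    · rw [SimpleGraph.Walk.length_concat, hl]
    · rw [SimpleGraph.Walk.edges_concat, he, List.range_succ (n := b)]
      simp

lemma mod_succ_eq (L i : ℕ) (h : i < L) : (i+1) % L = if i + 1 = L then 0 else i + 1 := by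
  split
  · next h => rw [h, Nat.mod_self]
  · exact Nat.mod_eq_of_lt (by omega)

lemma cycle_of_fn {V : Type*} (G : SimpleGraph V) (L : ℕ) (hL : 3 ≤ L) (f : ℕ → V)
    (hinj : ∀ i < L, ∀ j < L, f i = f j → i = j)
    (hadj : ∀ i < L, G.Adj (f i) (f ((i+1) % L))) : hasCycleLength G L := by
  set g : ℕ → V := fun i => f ((i+1) % L) with hg
  have hadj' : ∀ i < L - 1, G.Adj (g i) (g (i+1)) := by
    intro i hi
    have h1 : (i+1) % L = i+1 := Nat.mod_eq_of_lt (by omega)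
    have := hadj (i+1) (by omega)
    simpa [hg, h1] using this
  obtain ⟨w, hs, hl, he⟩ := walk_aux G g (L-1) hadj'
  have hg0 : g 0 = f 1 := by simp [hg, Nat.mod_eq_of_lt (show 1 < L by omega)]
  have hgL : g (L-1) = f 0 := by
    have h2 : (L-1+1) % L = 0 := by
      have : L - 1 + 1 = L := by omega
      rw [this, Nat.mod_self]
    simp only [hg, h2]
  have hginj : ∀ i < L, ∀ j < L, g i = g j → i = j := by
    intro i hi j hj hij
    have h1 : (i+1) % L < L := Nat.mod_lt _ (by omega)
    have h2 : (j+1) % L < L := Nat.mod_lt _ (by omega)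
    have h3 := hinj _ h1 _ h2 hij
    rw [mod_succ_eq L i hi, mod_succ_eq L j hj] at h3
    split at h3 <;> split at h3 <;> omega
  have hwpath : w.IsPath := by
    rw [SimpleGraph.Walk.isPath_def, hs]
    refine List.Nodup.map_on ?_ List.nodup_range
    intro i hi j hj hij
    rw [List.mem_range] at hi hj
    exact hginj i (by omega) j (by omega) hij
  have hadj01 : G.Adj (f 0) (f 1) := by
    have := hadj 0 (by omega)
    rwa [Nat.mod_eq_of_lt (show 1 < L by omega)] at this
  set w2 : G.Walk (f 1) (f 0) := w.copy hg0 hgL with hw2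
  have hw2path : w2.IsPath := (SimpleGraph.Walk.isPath_copy _ _ _).mpr hwpath
  have hedge : s(f 0, f 1) ∉ w2.edges := by
    rw [hw2, SimpleGraph.Walk.edges_copy, he]
    intro hmem
    rw [List.mem_map] at hmem
    obtain ⟨i, hi, hsym⟩ := hmem
    rw [List.mem_range] at hi
    rw [Sym2.eq_iff] at hsym
    simp only [hg] at hsym
    have hiL : (i+1) % L = i + 1 := Nat.mod_eq_of_lt (by omega)
    rcases hsym with ⟨h1, h2⟩ | ⟨h1, h2⟩
    · have := hinj ((i+1) % L) (Nat.mod_lt _ (by omega)) 0 (by omega) h1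
      omega
    · have e2 := hinj ((i+1) % L) (Nat.mod_lt _ (by omega)) 1 (by omega) h1
      have hi0 : i = 0 := by omega
      subst hi0
      have h2L : (0+1+1) % L = 2 := Nat.mod_eq_of_lt (by omega)
      have e1 := hinj ((0+1+1) % L) (Nat.mod_lt _ (by omega)) 0 (by omega) h2
      omega
  refine ⟨f 0, SimpleGraph.Walk.cons hadj01 w2, ?_, ?_⟩
  · rw [SimpleGraph.Walk.cons_isCycle_iff]
    exact ⟨hw2path, hedge⟩
  · rw [SimpleGraph.Walk.length_cons, SimpleGraph.Walk.length_copy, hl]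
    omega



section Core
variable {M m : ℕ}

lemma exists_X (M m : ℕ) (hm : 3 ≤ m) (hMn : m + 1 ≤ M) (k : Fin (m+1) → Fin (M+1))
    (hmono : Monotone k)
    (hbound : ∀ v : Fin M, (Finset.univ.filter fun p => k p = v.castSucc).card ≤ m - 1) :
    ∃ X : Fin (m+1) → Fin M, Function.Injective X ∧
      ∀ p : Fin (m+1), k p ≠ (X p).castSucc ∧ k p ≠ (X (p + 1)).castSucc := by
  have hM : 4 ≤ M := by omega
  -- class-interval bound
  have hfull : ∀ a b : Fin (m+1), a ≤ b → k a = k b → k b ≠ Fin.last M →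
      (b:ℕ) + 1 - (a:ℕ) ≤ m - 1 := by
    intro a b hab hk hlast
    have hsub : Finset.Icc a b ⊆
        Finset.univ.filter fun p => k p = ((k b).castPred hlast).castSucc := by
      intro r hr
      rw [Finset.mem_Icc] at hr
      rw [Finset.mem_filter]
      refine ⟨Finset.mem_univ _, ?_⟩
      rw [Fin.castSucc_castPred]
      have h1 : k r ≤ k b := hmono hr.2
      have h2 : k b ≤ k r := by rw [← hk]; exact hmono hr.1
      exact le_antisymm h1 h2
    have hc := Finset.card_le_card hsub
    rw [Fin.card_Icc] at hc
    exact le_trans hc (hbound _)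
  have hval : ∀ p : Fin (m+1), ((p+1 : Fin (m+1)) : ℕ) = if (p:ℕ) = m then 0 else (p:ℕ)+1 := by
    intro p
    rw [Fin.val_add_one]
    by_cases h : (p:ℕ) = m
    · rw [if_pos h, if_pos (by ext; simpa using h)]
    · rw [if_neg h, if_neg (by simp [Fin.ext_iff, h])]
  set Cp : Fin (m+1) → Prop := fun p => k (p+1) ≠ k p ∧ k (p+1) ≠ Fin.last M with hCp
  have hdecC : DecidablePred Cp := fun p => by rw [hCp]; infer_instance
  set A : Finset (Fin M) := Finset.univ.filter (fun v => ∃ p, k p = v.castSucc) with hA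
  set Cs : Finset (Fin (m+1)) := Finset.univ.filter Cp with hCs
  -- block starts are unique per value
  have hstart : ∀ p q : Fin (m+1), Cp p → Cp q → k (p+1) = k (q+1) → ¬ ((p+1) < (q+1)) := by
    intro p q hp hq hk hlt
    rw [Fin.lt_def] at hlt
    have vp := hval p
    have vq := hval q
    by_cases hqm : (q:ℕ) = m
    · rw [if_pos hqm] at vq; omega
    · rw [if_neg hqm] at vq
      have hle1 : p+1 ≤ q := by
        rw [Fin.le_def]
        by_cases hpm : (p:ℕ) = m
        · rw [if_pos hpm] at vp; omega
        · rw [if_neg hpm] at vp; omega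
      have hle2 : q ≤ q+1 := by rw [Fin.le_def]; omega
      have h1 : k (p+1) ≤ k q := hmono hle1
      have h2 : k q ≤ k (q+1) := hmono hle2
      have heq : k q = k (q+1) := le_antisymm h2 (by rw [← hk]; exact h1)
      exact hq.1 heq.symm
  -- predecessor function
  set pred : Fin (m+1) → Fin (m+1) :=
    fun j => if (j:ℕ) = 0 then Fin.last m else ⟨(j:ℕ) - 1, by omega⟩ with hpreddef
  have hpred : ∀ j, pred j + 1 = j := by
    intro j
    by_cases h : (j:ℕ) = 0
    · rw [hpreddef]; simp only [if_pos h]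
      ext
      rw [hval (Fin.last m)]
      rw [if_pos (Fin.val_last m)]
      omega
    · rw [hpreddef]; simp only [if_neg h]
      ext
      rw [hval ⟨(j:ℕ) - 1, by omega⟩]
      have hv : ((⟨(j:ℕ)-1, by omega⟩ : Fin (m+1)) : ℕ) = (j:ℕ)-1 := rfl
      rw [hv]
      have hj : (j:ℕ) ≤ m := by omega
      rw [if_neg (by omega)]
      omega
  -- |A| ≤ |Cs|
  classical
  set ψ : Fin M → Fin (m+1) := fun v =>
    if h : (Finset.univ.filter fun p => k p = v.castSucc).Nonempty then
      pred ((Finset.univ.filter fun p => k p = v.castSucc).min' h) else 0 with hψ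
  have hψmem : ∀ v ∈ A, ψ v ∈ Cs ∧ k (ψ v + 1) = v.castSucc := by
    intro v hv
    rw [hA, Finset.mem_filter] at hv
    obtain ⟨-, p0, hp0⟩ := hv
    have hne : (Finset.univ.filter fun p => k p = v.castSucc).Nonempty :=
      ⟨p0, Finset.mem_filter.mpr ⟨Finset.mem_univ _, hp0⟩⟩
    rw [hψ]
    simp only [dif_pos hne]
    set j := (Finset.univ.filter fun p => k p = v.castSucc).min' hne with hj
    have hjmem := Finset.min'_mem _ hne
    rw [Finset.mem_filter] at hjmem
    have hkj : k j = v.castSucc := hjmem.2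
    have hk1 : k (pred j + 1) = v.castSucc := by rw [hpred j]; exact hkj
    refine ⟨?_, hk1⟩
    rw [hCs, Finset.mem_filter]
    refine ⟨Finset.mem_univ _, ?_, ?_⟩
    · -- k (pred j + 1) ≠ k (pred j)
      rw [hpred j, hkj]
      intro heq
      by_cases h0 : (j:ℕ) = 0
      · have hpj : pred j = Fin.last m := by rw [hpreddef]; simp only [if_pos h0]
        rw [hpj] at heq
        have h0le : j ≤ Fin.last m := by rw [Fin.le_def]; simp [Fin.le_def]; omega
        have := hfull j (Fin.last m) h0le (by rw [hkj, ← heq]) (by rw [← heq]; exact (Fin.castSucc_lt_last v).ne)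
        simp only [Fin.val_last] at this
        omega
      · have hpj : pred j = ⟨(j:ℕ)-1, by omega⟩ := by rw [hpreddef]; simp only [if_neg h0]
        rw [hpj] at heq
        have : (⟨(j:ℕ)-1, by omega⟩ : Fin (m+1)) ∈ Finset.univ.filter fun p => k p = v.castSucc :=
          Finset.mem_filter.mpr ⟨Finset.mem_univ _, heq.symm⟩
        have hle : j ≤ ⟨(j:ℕ)-1, by omega⟩ := by
          exact Finset.min'_le _ _ this
        rw [Fin.le_def] at hle
        have hv : ((⟨(j:ℕ)-1, by omega⟩ : Fin (m+1)) : ℕ) = (j:ℕ)-1 := rfl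
        omega
    · rw [hpred j, hkj]
      exact (Fin.castSucc_lt_last v).ne
  have hAcard : A.card ≤ Cs.card := by
    refine Finset.card_le_card_of_injOn ψ (fun v hv => (hψmem v hv).1) ?_
    intro v hv v' hv' heq
    have h1 := (hψmem v hv).2
    have h2 := (hψmem v' hv').2
    rw [heq] at h1
    exact Fin.castSucc_injective _ (h1.symm.trans h2)
  -- filler embedding
  have hcard : (Finset.univ \ Cs).card ≤ (Finset.univ \ A).card := by
    rw [Finset.card_sdiff_of_subset (Finset.subset_univ _), Finset.card_sdiff_of_subset (Finset.subset_univ _)]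
    simp only [Finset.card_univ, Fintype.card_fin]
    have h1 : Cs.card ≤ m + 1 := by
      simpa using Finset.card_le_univ Cs
    have h2 : A.card ≤ Cs.card := hAcard
    omega
  obtain ⟨e⟩ : Nonempty ((Finset.univ \ Cs : Finset (Fin (m+1))) ↪ (Finset.univ \ A : Finset (Fin M))) := by
    apply Function.Embedding.nonempty_of_card_le
    rw [Fintype.card_coe, Fintype.card_coe]
    exact hcard
  set X : Fin (m+1) → Fin M := fun p =>
    if h : Cp p then (k (p+1)).castPred h.2
    else (e ⟨p, by rw [Finset.mem_sdiff]; exact ⟨Finset.mem_univ _,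
      by rw [hCs, Finset.mem_filter]; tauto⟩⟩ : {x // x ∈ Finset.univ \ A}).1 with hX
  have hXC : ∀ p, (h : Cp p) → (X p).castSucc = k (p+1) := by
    intro p h
    rw [hX]
    simp only [dif_pos h, Fin.castSucc_castPred]
  have hXA : ∀ p, Cp p → X p ∈ A := by
    intro p h
    rw [hA, Finset.mem_filter]
    exact ⟨Finset.mem_univ _, ⟨p+1, (hXC p h).symm⟩⟩
  have hXnA : ∀ p, ¬ Cp p → X p ∉ A := by
    intro p h
    rw [hX]
    simp only [dif_neg h]
    have := (e ⟨p, by rw [Finset.mem_sdiff]; exact ⟨Finset.mem_univ _,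
      by rw [hCs, Finset.mem_filter]; tauto⟩⟩).2
    rw [Finset.mem_sdiff] at this
    exact this.2
  have hXinj : Function.Injective X := by
    intro p q hpq
    by_cases hp : Cp p <;> by_cases hq : Cp q
    · have hkk : k (p+1) = k (q+1) := by rw [← hXC p hp, ← hXC q hq, hpq]
      have h1 := hstart p q hp hq hkk
      have h2 := hstart q p hq hp hkk.symm
      have h3 : p + 1 = q + 1 := by
        rcases lt_trichotomy (p+1) (q+1) with h|h|h
        · exact absurd h h1
        · exact h
        · exact absurd h h2
      exact add_right_cancel h3
    · exact absurd (hpq ▸ hXA p hp) (hXnA q hq)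
    · exact absurd (hpq ▸ hXnA p hp) (fun hh => hh (hXA q hq))
    · rw [hX] at hpq
      simp only [dif_neg hp, dif_neg hq] at hpq
      have := e.injective (Subtype.ext hpq)
      exact congrArg Subtype.val this
  refine ⟨X, hXinj, fun p => ⟨?_, ?_⟩⟩
  · by_cases h : Cp p
    · rw [hXC p h]
      exact fun hh => h.1 hh.symm
    · intro hh
      exact hXnA p h (by rw [hA, Finset.mem_filter]; exact ⟨Finset.mem_univ _, ⟨p, hh⟩⟩)
  · by_cases h : Cp (p+1)
    · rw [hXC (p+1) h]
      intro heq
      have hne1 : k (p+1+1) ≠ k (p+1) := h.1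
      have hlast : k (p+1+1) ≠ Fin.last M := h.2
      have vp := hval p
      have vp1 := hval (p+1)
      by_cases hpm : (p:ℕ) = m
      · -- p = last, p+1 = 0, p+1+1 = 1
        rw [if_pos hpm] at vp
        rw [vp] at vp1
        rw [if_neg (by omega)] at vp1
        -- (p+1+1).val = 1
        have hle : (p+1+1) ≤ p := by rw [Fin.le_def]; omega
        have := hfull (p+1+1) p hle heq.symm (by rw [heq]; exact hlast)
        omega
      · by_cases hpm1 : (p:ℕ) = m - 1
        · -- p+1 = last, p+1+1 = 0
          rw [if_neg hpm] at vp
          rw [vp, if_pos (by omega)] at vp1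
          have hle : (p+1+1) ≤ p := by rw [Fin.le_def]; omega
          have := hfull (p+1+1) p hle heq.symm (by rw [heq]; exact hlast)
          omega
        · rw [if_neg hpm] at vp
          rw [vp, if_neg (by omega)] at vp1
          have hle1 : p ≤ p+1 := by rw [Fin.le_def]; omega
          have hle2 : p+1 ≤ p+1+1 := by rw [Fin.le_def]; omega
          have h1 : k p ≤ k (p+1) := hmono hle1
          have h2 : k (p+1) ≤ k (p+1+1) := hmono hle2
          have : k (p+1) = k (p+1+1) := le_antisymm h2 (by rw [← heq]; exact h1)
          exact hne1 this.symm
    · intro hh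
      exact hXnA (p+1) h (by rw [hA, Finset.mem_filter]; exact ⟨Finset.mem_univ _, ⟨p, hh⟩⟩)

end Core


/-- Let `G` be bipartite with parts of equal size `M ≥ n ≥ 4`. If every vertex `y` of
the second part has degree at least `M - 1` and `G` has no `C_{2n}`, then `G` contains
a complete bipartite `K_{n-1, n-1}`. -/
theorem Knn_from_high_degree (M n : ℕ) (hn : 4 ≤ n) (hMn : n ≤ M)
    (G : SimpleGraph (Fin M ⊕ Fin M))
    (hG : G ≤ completeBipartiteGraph (Fin M) (Fin M))
    (hdeg : ∀ y : Fin M, M - 1 ≤ (G.neighborSet (Sum.inr y)).ncard)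
    (hno : ¬ hasCycleLength G (2 * n)) :
    ∃ (S T : Finset (Fin M)), S.card = n - 1 ∧ T.card = n - 1 ∧
      ∀ a ∈ S, ∀ b ∈ T, G.Adj (Sum.inl a) (Sum.inr b) := by
  classical
  have hM : 4 ≤ M := by omega
  -- each y has at most one non-neighbor
  have hNN : ∀ y : Fin M,
      (Finset.univ.filter fun x => ¬ G.Adj (Sum.inl x) (Sum.inr y)).card ≤ 1 := by
    intro y
    set P := Finset.univ.filter fun x => G.Adj (Sum.inl x) (Sum.inr y) with hP
    have himg : G.neighborSet (Sum.inr y) = Sum.inl '' (↑P : Set (Fin M)) := by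
      ext z
      constructor
      · intro hz
        have hadj : G.Adj (Sum.inr y) z := hz
        have hcb := hG hadj
        have hleft : z.isLeft := by
          rcases hcb with ⟨h1, -⟩ | ⟨-, h2⟩
          · simp at h1
          · exact h2
        obtain ⟨x, rfl⟩ := Sum.isLeft_iff.mp hleft
        exact ⟨x, by simp [hP, hadj.symm], rfl⟩
      · rintro ⟨x, hx, rfl⟩
        simp only [hP, Finset.coe_filter, Set.mem_setOf_eq] at hx
        exact hx.2.symm
    have hncard : (G.neighborSet (Sum.inr y)).ncard = P.card := by
      rw [himg, Set.ncard_image_of_injective _ Sum.inl_injective, Set.ncard_coe_finset]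
    have h1 : M - 1 ≤ P.card := by rw [← hncard]; exact hdeg y
    have h2 := Finset.card_filter_add_card_filter_not
      (s := (Finset.univ : Finset (Fin M))) (fun x => G.Adj (Sum.inl x) (Sum.inr y))
    rw [Finset.card_univ, Fintype.card_fin] at h2
    rw [← hP] at h2
    omega
  have huniq : ∀ (x x' : Fin M) (y : Fin M), ¬ G.Adj (Sum.inl x) (Sum.inr y) →
      ¬ G.Adj (Sum.inl x') (Sum.inr y) → x = x' := by
    intro x x' y h1 h2
    exact Finset.card_le_one.mp (hNN y) x (by simp [h1]) x' (by simp [h2])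
  by_cases hbig : ∃ x : Fin M,
      n - 1 ≤ (Finset.univ.filter fun y => ¬ G.Adj (Sum.inl x) (Sum.inr y)).card
  · obtain ⟨x, hx⟩ := hbig
    obtain ⟨T, hTsub, hTcard⟩ := Finset.exists_subset_card_eq hx
    have hScard : n - 1 ≤ (Finset.univ.erase x).card := by
      rw [Finset.card_erase_of_mem (Finset.mem_univ _), Finset.card_univ, Fintype.card_fin]
      omega
    obtain ⟨S, hSsub, hScard'⟩ := Finset.exists_subset_card_eq hScard
    refine ⟨S, T, hScard', hTcard, ?_⟩
    intro a ha b hb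
    by_contra hna
    have hxb : ¬ G.Adj (Sum.inl x) (Sum.inr b) := by
      have := hTsub hb
      rw [Finset.mem_filter] at this
      exact this.2
    have : a = x := huniq a x b hna hxb
    have := hSsub ha
    rw [Finset.mem_erase] at this
    exact this.1 ‹a = x›
  · push_neg at hbig
    exfalso
    apply hno
    obtain ⟨m, rfl⟩ : ∃ m, n = m + 1 := ⟨n - 1, by omega⟩
    have hm : 3 ≤ m := by omega
    -- the "miss" key
    set key : Fin M → Fin (M+1) := fun y =>
      if h : (Finset.univ.filter fun x => ¬ G.Adj (Sum.inl x) (Sum.inr y)).Nonempty then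
        (h.choose).castSucc else Fin.last M with hkeydef
    have hkey : ∀ (x y : Fin M), ¬ G.Adj (Sum.inl x) (Sum.inr y) ↔ key y = x.castSucc := by
      intro x y
      constructor
      · intro hna
        have hne : (Finset.univ.filter fun x => ¬ G.Adj (Sum.inl x) (Sum.inr y)).Nonempty :=
          ⟨x, by simp [hna]⟩
        rw [hkeydef]
        simp only [dif_pos hne]
        have hmem := hne.choose_spec
        rw [Finset.mem_filter] at hmem
        rw [huniq _ x y hmem.2 hna]
      · intro hk
        simp only [hkeydef] at hk
        split at hk
        · next h =>
          have hmem := h.choose_spec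
          rw [Finset.mem_filter] at hmem
          rw [Fin.castSucc_inj.mp hk] at hmem
          exact hmem.2
        · exact absurd hk (Fin.castSucc_lt_last x).ne'
    set Y0 : Fin (m+1) → Fin M := Fin.castLE hMn with hY0
    set σ := Tuple.sort (key ∘ Y0) with hσ
    set Y : Fin (m+1) → Fin M := Y0 ∘ σ with hY
    have hYinj : Function.Injective Y := (Fin.castLE_injective hMn).comp σ.injective
    set k : Fin (m+1) → Fin (M+1) := key ∘ Y with hk
    have hmono : Monotone k := Tuple.monotone_sort (key ∘ Y0)
    have hbound : ∀ v : Fin M, (Finset.univ.filter fun p => k p = v.castSucc).card ≤ m - 1 := by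
      intro v
      have hsub : ∀ p ∈ (Finset.univ.filter fun p => k p = v.castSucc),
          Y p ∈ (Finset.univ.filter fun y => ¬ G.Adj (Sum.inl v) (Sum.inr y)) := by
        intro p hp
        rw [Finset.mem_filter] at hp ⊢
        exact ⟨Finset.mem_univ _, (hkey v (Y p)).mpr hp.2⟩
      have hle := Finset.card_le_card_of_injOn Y hsub (fun a _ b _ hab => hYinj hab)
      have := hbig v
      omega
    obtain ⟨X, hXinj, hcon⟩ := exists_X M m hm (by omega) k hmono hbound
    have hval : ∀ p : Fin (m+1), ((p+1 : Fin (m+1)) : ℕ) = if (p:ℕ) = m then 0 else (p:ℕ)+1 := by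
      intro p
      rw [Fin.val_add_one]
      by_cases h : (p:ℕ) = m
      · rw [if_pos h, if_pos (by ext; simpa using h)]
      · rw [if_neg h, if_neg (by simp [Fin.ext_iff, h])]
    set pfin : ℕ → Fin (m+1) := fun a => ⟨a % (m+1), Nat.mod_lt _ (by omega)⟩ with hpfin
    have hpfinval : ∀ a, (pfin a : ℕ) = a % (m+1) := by
      intro a; simp only [hpfin]
    have hpsucc : ∀ a, a < m + 1 → pfin a + 1 = pfin (a + 1) := by
      intro a ha
      ext
      rw [hval, hpfinval, hpfinval, Nat.mod_eq_of_lt ha]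
      by_cases h : a = m
      · rw [if_pos h, h]
        rw [Nat.mod_self]
      · rw [if_neg h, Nat.mod_eq_of_lt (by omega)]
    set f : ℕ → Fin M ⊕ Fin M := fun i =>
      if i % 2 = 0 then Sum.inl (X (pfin (i/2))) else Sum.inr (Y (pfin (i/2))) with hf
    have feval_even : ∀ a : ℕ, f (2*a) = Sum.inl (X (pfin a)) := by
      intro a
      have h2 : (2*a) % 2 = 0 := by omega
      have h3 : (2*a) / 2 = a := by omega
      simp only [hf, h2, h3, if_pos]
    have feval_odd : ∀ a : ℕ, f (2*a+1) = Sum.inr (Y (pfin a)) := by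
      intro a
      have h2 : (2*a+1) % 2 ≠ 0 := by omega
      have h3 : (2*a+1) / 2 = a := by omega
      simp only [hf, h3, if_neg h2]
    have hGadj : ∀ p : Fin (m+1), G.Adj (Sum.inl (X p)) (Sum.inr (Y p)) := by
      intro p
      by_contra hna
      exact (hcon p).1 ((hkey _ _).mp hna)
    have hGadj2 : ∀ p : Fin (m+1), G.Adj (Sum.inr (Y p)) (Sum.inl (X (p+1))) := by
      intro p
      by_contra hna
      exact (hcon p).2 ((hkey _ _).mp (fun h => hna h.symm))
    apply cycle_of_fn G (2*(m+1)) (by omega) f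
    · intro i hi j hj hij
      simp only [hf] at hij
      by_cases h1 : i % 2 = 0 <;> by_cases h2 : j % 2 = 0 <;>
        simp only [h1, h2, ite_true, ite_false, reduceIte, if_pos, if_neg] at hij
      · have h3 := hXinj (Sum.inl_injective hij)
        have h4 : (pfin (i/2) : ℕ) = (pfin (j/2) : ℕ) := by rw [h3]
        rw [hpfinval, hpfinval, Nat.mod_eq_of_lt (by omega), Nat.mod_eq_of_lt (by omega)] at h4
        omega
      · exact absurd hij (by simp)
      · exact absurd hij (by simp)
      · have h3 := hYinj (Sum.inr_injective hij)
        have h4 : (pfin (i/2) : ℕ) = (pfin (j/2) : ℕ) := by rw [h3]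
        rw [hpfinval, hpfinval, Nat.mod_eq_of_lt (by omega), Nat.mod_eq_of_lt (by omega)] at h4
        omega
    · intro i hi
      by_cases h1 : i % 2 = 0
      · obtain ⟨a, rfl⟩ : ∃ a, i = 2*a := ⟨i/2, by omega⟩
        have ha : a < m + 1 := by omega
        have hmod : (2*a+1) % (2*(m+1)) = 2*a+1 := Nat.mod_eq_of_lt (by omega)
        rw [hmod, feval_even a, feval_odd a]
        exact hGadj (pfin a)
      · obtain ⟨a, rfl⟩ : ∃ a, i = 2*a+1 := ⟨i/2, by omega⟩
        have ha : a < m + 1 := by omega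
        by_cases h3 : a = m
        · subst h3
          have hmod : (2*a+1+1) % (2*(a+1)) = 0 := by
            have h4 : 2*a+1+1 = 2*(a+1) := by ring
            rw [h4, Nat.mod_self]
          rw [hmod, feval_odd a]
          have h0 : f 0 = Sum.inl (X (pfin 0)) := by
            have := feval_even 0
            simpa using this
          rw [h0]
          have h5 : pfin a + 1 = pfin 0 := by
            rw [hpsucc a (by omega)]
            ext
            rw [hpfinval, hpfinval, Nat.mod_self, Nat.zero_mod]
          have := hGadj2 (pfin a)
          rwa [h5] at this
        · have hmod : (2*a+1+1) % (2*(m+1)) = 2*(a+1) := by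
            have h4 : 2*a+1+1 = 2*(a+1) := by ring
            rw [h4]
            exact Nat.mod_eq_of_lt (by omega)
          rw [hmod, feval_odd a, feval_even (a+1)]
          have := hGadj2 (pfin a)
          rwa [hpsucc a (by omega)] at this
end

section
/- (Moon–Moser) Let G be a bipartite graph with parts X, Y, |X| = |Y| = n ≥ 4. If deg(x) + deg(y) ≥ n+1 for every pair of nonadjacent vertices x ∈ X, y ∈ Y, then G has a Hamiltonian cycle. -/
open SimpleGraph



lemma MMcast_inj {m : ℕ} [NeZero m] {a b : ℕ} (ha : a < m) (hb : b < m)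
    (h : (a : ZMod m) = (b : ZMod m)) : a = b := by
  have := congrArg ZMod.val h
  rwa [ZMod.val_cast_of_lt ha, ZMod.val_cast_of_lt hb] at this

lemma MMval_add_one {m : ℕ} [NeZero m] (i : ZMod m) (hm : 1 ≤ m) :
    (i + 1).val = if i.val = m - 1 then 0 else i.val + 1 := by
  have h1 : i + 1 = ((i.val + 1 : ℕ) : ZMod m) := by
    push_cast
    rw [ZMod.natCast_val, ZMod.cast_id]
  rw [h1, ZMod.val_natCast]
  have hv := ZMod.val_lt i
  split_ifs with h
  · have : i.val + 1 = m := by omega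
    rw [this, Nat.mod_self]
  · exact Nat.mod_eq_of_lt (by omega)

lemma MMcrossing {n m : ℕ} (hn : 4 ≤ n) (hm : m = 2*n) (G : SimpleGraph (Fin n ⊕ Fin n))
    (hG : G ≤ completeBipartiteGraph (Fin n) (Fin n))
    (x0 y0 : Fin n) (hnadj : ¬ G.Adj (Sum.inl x0) (Sum.inr y0))
    (hdeg : n + 1 ≤ (G.neighborSet (Sum.inl x0)).ncard + (G.neighborSet (Sum.inr y0)).ncard)
    (g : ZMod m → (Fin n ⊕ Fin n)) (hbij : Function.Bijective g)
    (h0 : g 0 = Sum.inl x0) (hlast : g ((m-1 : ℕ) : ZMod m) = Sum.inr y0)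
    (hadj : ∀ j : ℕ, j < m-1 → G.Adj (g (j : ZMod m)) (g ((j+1 : ℕ) : ZMod m))) :
    ∃ h : ZMod m → (Fin n ⊕ Fin n), Function.Bijective h ∧
      ∀ i, G.Adj (h i) (h (i+1)) := by
  classical
  have : NeZero m := ⟨by omega⟩
  set p : ℕ → (Fin n ⊕ Fin n) := fun j => g (j : ZMod m) with hp
  have hp0 : p 0 = Sum.inl x0 := by simpa [hp] using h0
  have hplast : p (m-1) = Sum.inr y0 := hlast
  have pinj : ∀ a < m, ∀ b < m, p a = p b → a = b := by
    intro a ha b hb h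
    exact MMcast_inj ha hb (hbij.1 h)
  have hside : ∀ a b, G.Adj a b → (a.isLeft = true ↔ ¬ (b.isLeft = true)) := by
    intro a b hab
    have h2 := hG hab
    rcases a with a | a <;> rcases b with b | b <;>
      simp only [completeBipartiteGraph_adj, Sum.isLeft_inl, Sum.isLeft_inr,
        Sum.isRight_inl, Sum.isRight_inr] at h2 ⊢ <;> revert h2 <;> decide
  have parity : ∀ j, j < m → ((p j).isLeft = true ↔ Even j) := by
    intro j
    induction j with
    | zero => intro _; rw [hp0]; simp
    | succ t ih =>
      intro h
      have ht := ih (by omega)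
      have h2 := hside _ _ (hadj t (by omega))
      rw [Nat.even_add_one]
      tauto
  -- the two finsets
  set A : Finset ℕ := (Finset.range m).filter
      (fun j => Even j ∧ G.Adj (Sum.inr y0) (p j)) with hA
  set B : Finset ℕ := (Finset.range m).filter
      (fun j => Even j ∧ G.Adj (Sum.inl x0) (p (j+1))) with hB
  have hmemA : ∀ j, j ∈ A ↔ j < m ∧ Even j ∧ G.Adj (Sum.inr y0) (p j) := by
    intro j; simp [hA, Finset.mem_filter, Finset.mem_range, and_assoc]
  have hmemB : ∀ j, j ∈ B ↔ j < m ∧ Even j ∧ G.Adj (Sum.inl x0) (p (j+1)) := by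
    intro j; simp [hB, Finset.mem_filter, Finset.mem_range, and_assoc]
  have hsurjp : ∀ v : Fin n ⊕ Fin n, ∃ j < m, p j = v := by
    intro v
    obtain ⟨i, rfl⟩ := hbij.2 v
    exact ⟨i.val, i.val_lt, by rw [hp]; simp [ZMod.natCast_val, ZMod.cast_id]⟩
  have meven : m % 2 = 0 := by omega
  have cardA : (G.neighborSet (Sum.inr y0)).ncard = A.card := by
    rw [Set.ncard_eq_toFinset_card']
    refine (Finset.card_bij (fun j _ => p j) ?_ ?_ ?_).symm
    · intro j hj
      rw [hmemA] at hj
      rw [Set.mem_toFinset]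
      exact hj.2.2
    · intro a ha b hb h
      rw [hmemA] at ha hb
      exact pinj a ha.1 b hb.1 h
    · intro v hv
      rw [Set.mem_toFinset, mem_neighborSet] at hv
      obtain ⟨j, hj, rfl⟩ := hsurjp v
      have hleft : (p j).isLeft = true := by
        have := hside _ _ hv
        simpa using this
      exact ⟨j, (hmemA j).2 ⟨hj, (parity j hj).1 hleft, hv⟩, rfl⟩
  have cardB : (G.neighborSet (Sum.inl x0)).ncard = B.card := by
    rw [Set.ncard_eq_toFinset_card']
    refine (Finset.card_bij (fun j _ => p (j+1)) ?_ ?_ ?_).symm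
    · intro j hj
      rw [hmemB] at hj
      rw [Set.mem_toFinset]
      exact hj.2.2
    · intro a ha b hb h
      rw [hmemB] at ha hb
      have ha2 : a + 1 < m := by
        rcases ha.2.1 with ⟨c, hc⟩
        omega
      have hb2 : b + 1 < m := by
        rcases hb.2.1 with ⟨c, hc⟩
        omega
      have := pinj _ ha2 _ hb2 h
      omega
    · intro v hv
      rw [Set.mem_toFinset, mem_neighborSet] at hv
      obtain ⟨j, hj, rfl⟩ := hsurjp v
      have hright : ¬ (p j).isLeft = true := by
        have := hside _ _ hv
        simpa using this
      have hodd : ¬ Even j := fun h => hright ((parity j hj).2 h)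
      have hj1 : j ≠ 0 := by rintro rfl; exact hodd (by simp)
      refine ⟨j - 1, (hmemB _).2 ⟨by omega, ?_, ?_⟩, congrArg p (by omega)⟩
      · rcases Nat.even_or_odd j with h | h
        · exact absurd h hodd
        · rcases h with ⟨c, hc⟩; exact ⟨c, by omega⟩
      · rw [show j - 1 + 1 = j by omega]; exact hv
  have hAsub : A ⊆ (Finset.range m).filter (fun j => Even j) := by
    intro j hj; rw [hmemA] at hj
    simp [Finset.mem_filter, Finset.mem_range, hj.1, hj.2.1]
  have hBsub : B ⊆ (Finset.range m).filter (fun j => Even j) := by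
    intro j hj; rw [hmemB] at hj
    simp [Finset.mem_filter, Finset.mem_range, hj.1, hj.2.1]
  have hevens : ((Finset.range m).filter (fun j => Even j)).card = n := by
    have himg : (Finset.range m).filter (fun j => Even j)
        = (Finset.range n).image (fun i => 2*i) := by
      ext j
      simp only [Finset.mem_filter, Finset.mem_range, Finset.mem_image, Nat.even_iff]
      constructor
      · rintro ⟨hj, hj2⟩
        exact ⟨j / 2, by omega, by omega⟩
      · rintro ⟨i, hi, rfl⟩
        omega
    rw [himg, Finset.card_image_of_injective _ (fun a b h => by omega), Finset.card_range]
  have hAB : (A ∩ B).Nonempty := by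
    by_contra hcon
    rw [Finset.not_nonempty_iff_eq_empty] at hcon
    have hdisj : Disjoint A B := Finset.disjoint_iff_inter_eq_empty.2 hcon
    have h1 : (A ∪ B).card = A.card + B.card := Finset.card_union_of_disjoint hdisj
    have h2 : (A ∪ B).card ≤ n := by
      rw [← hevens]
      exact Finset.card_le_card (Finset.union_subset hAsub hBsub)
    omega
  obtain ⟨j, hj⟩ := hAB
  rw [Finset.mem_inter, hmemA, hmemB] at hj
  obtain ⟨⟨hjm, hjeven, hjA⟩, _, _, hjB⟩ := hj
  have hj0 : j ≠ 0 := by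
    rintro rfl
    rw [hp0] at hjA
    exact hnadj hjA.symm
  have hjle : j ≤ m - 2 := by
    rcases hjeven with ⟨c, hc⟩
    omega
  -- the rotation
  set σ : ℕ → ℕ := fun k => if k ≤ j then k else m + j - k with hσ
  have hσlt : ∀ k < m, σ k < m := by
    intro k hk
    simp only [hσ]
    split_ifs <;> omega
  have hσinv : ∀ k < m, σ (σ k) = k := by
    intro k hk
    simp only [hσ]
    split_ifs <;> omega
  set τ : ZMod m → ZMod m := fun i => ((σ i.val : ℕ) : ZMod m) with hτ
  have hτval : ∀ i : ZMod m, (τ i).val = σ i.val := by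
    intro i
    rw [hτ]
    exact ZMod.val_cast_of_lt (hσlt _ (ZMod.val_lt i))
  have hτinv : Function.Involutive τ := by
    intro i
    have h1 : τ (τ i) = ((σ (σ i.val) : ℕ) : ZMod m) := by
      rw [hτ]; dsimp only; rw [hτval]
    rw [h1, hσinv _ (ZMod.val_lt i), ZMod.natCast_val, ZMod.cast_id]
  refine ⟨fun i => p (σ i.val), (hbij.comp hτinv.bijective : Function.Bijective (g ∘ τ)), ?_⟩
  intro i
  set k := i.val with hk
  have hkm : k < m := ZMod.val_lt i
  have hval1 : (i + 1).val = if k = m - 1 then 0 else k + 1 := MMval_add_one i (by omega)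
  rcases Nat.lt_or_ge k j with hkj | hkj
  · -- k < j
    have e1 : σ k = k := by simp only [hσ]; rw [if_pos (by omega)]
    have e2 : (i+1).val = k + 1 := by rw [hval1, if_neg (by omega)]
    have e3 : σ (k+1) = k + 1 := by simp only [hσ]; rw [if_pos (by omega)]
    dsimp only
    rw [e1, e2, e3]
    exact hadj k (by omega)
  rcases Nat.eq_or_lt_of_le hkj with hkj | hkj
  · -- k = j
    have e1 : σ k = j := by simp only [hσ]; rw [if_pos (by omega)]; omega
    have e2 : (i+1).val = k + 1 := by rw [hval1, if_neg (by omega)]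
    have e3 : σ (k+1) = m - 1 := by simp only [hσ]; rw [if_neg (by omega)]; omega
    dsimp only
    rw [e1, e2, e3, hplast]
    exact hjA.symm
  rcases Nat.lt_or_ge k (m-1) with hkm1 | hkm1
  · -- j < k < m - 1
    have e1 : σ k = m + j - k := by simp only [hσ]; rw [if_neg (by omega)]
    have e2 : (i+1).val = k + 1 := by rw [hval1, if_neg (by omega)]
    have e3 : σ (k+1) = m + j - k - 1 := by
      simp only [hσ]; rw [if_neg (by omega)]; omega
    dsimp only
    rw [e1, e2, e3]
    have e4 : m + j - k = (m + j - k - 1) + 1 := by omega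
    rw [e4]
    exact (hadj (m + j - k - 1) (by omega)).symm
  · -- k = m - 1
    have hk1 : k = m - 1 := by omega
    have e1 : σ k = j + 1 := by simp only [hσ]; rw [if_neg (by omega)]; omega
    have e2 : (i+1).val = 0 := by rw [hval1, if_pos hk1]
    have e3 : σ 0 = 0 := by simp only [hσ]; rw [if_pos (by omega)]
    dsimp only
    rw [e1, e2, e3, hp0]
    exact hjB.symm



variable {V : Type*}

/-- Walk along a cyclic sequence. -/
def MMwalk (G : SimpleGraph V) {m : ℕ} [NeZero m] (f : ZMod m → V)
    (hadj : ∀ i, G.Adj (f i) (f (i+1))) : (k : ℕ) → G.Walk (f 0) (f (k : ZMod m))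
  | 0 => Walk.nil.copy rfl (by norm_num)
  | (k+1) => ((MMwalk G f hadj k).concat (hadj k)).copy rfl (by push_cast; ring_nf)

lemma MMwalk_support (G : SimpleGraph V) {m : ℕ} [NeZero m] (f : ZMod m → V)
    (hadj : ∀ i, G.Adj (f i) (f (i+1))) (k : ℕ) :
    (MMwalk G f hadj k).support = (List.range (k+1)).map (fun (j : ℕ) => f (j : ZMod m)) := by
  induction k with
  | zero => rw [MMwalk]; simp [List.range_succ]
  | succ k ih =>
    rw [MMwalk, Walk.support_copy, Walk.support_concat, ih, List.range_succ (n := k+1),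
      List.map_append]
    simp

lemma MMwalk_edges (G : SimpleGraph V) {m : ℕ} [NeZero m] (f : ZMod m → V)
    (hadj : ∀ i, G.Adj (f i) (f (i+1))) (k : ℕ) :
    (MMwalk G f hadj k).edges
      = (List.range k).map (fun (j : ℕ) => s(f (j : ZMod m), f ((j : ZMod m)+1))) := by
  induction k with
  | zero => rw [MMwalk]; simp [List.range_succ]
  | succ k ih =>
    rw [MMwalk, Walk.edges_copy, Walk.edges_concat, ih, List.range_succ (n := k),
      List.map_append, List.concat_eq_append]
    simp

lemma hamSeq_to_cycle [DecidableEq V] (G : SimpleGraph V) (m : ℕ) (hm : 3 ≤ m)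
    (f : ZMod m → V) (hf : Function.Bijective f)
    (hadj : ∀ i, G.Adj (f i) (f (i+1))) :
    ∃ (v : V) (p : G.Walk v v), p.IsHamiltonianCycle := by
  have : NeZero m := ⟨by omega⟩
  have hcastinj : ∀ a < m, ∀ b < m, (a : ZMod m) = (b : ZMod m) → a = b := by
    intro a ha b hb h
    have := congrArg ZMod.val h
    rwa [ZMod.val_cast_of_lt ha, ZMod.val_cast_of_lt hb] at this
  refine ⟨f 0, (MMwalk G f hadj m).copy rfl (by rw [ZMod.natCast_self]), ?_⟩
  rw [Walk.isHamiltonianCycle_iff_isCycle_and_support_count_tail_eq_one]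
  have htail : ((MMwalk G f hadj m).copy rfl (by rw [ZMod.natCast_self])).support.tail
      = (List.range m).map (fun (j : ℕ) => f ((j : ZMod m)+1)) := by
    rw [Walk.support_copy, MMwalk_support, List.range_succ_eq_map, List.map_cons,
      List.tail_cons, List.map_map]
    refine List.map_congr_left ?_
    intro a _
    simp only [Function.comp_apply, Nat.succ_eq_add_one]
    push_cast
    ring_nf
  have htail_nodup : (((MMwalk G f hadj m).copy rfl
      (by rw [ZMod.natCast_self])).support.tail).Nodup := by
    rw [htail]
    refine List.Nodup.map_on ?_ (List.nodup_range : (List.range m).Nodup)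
    intro a ha b hb h
    rw [List.mem_range] at ha hb
    exact hcastinj a ha b hb (add_right_cancel (hf.1 h))
  constructor
  · rw [Walk.isCycle_def]
    refine ⟨?_, ?_, ?_⟩
    · -- trail: edges nodup
      rw [Walk.isTrail_def, Walk.edges_copy, MMwalk_edges]
      refine List.Nodup.map_on ?_ (List.nodup_range : (List.range m).Nodup)
      intro a ha b hb h
      rw [List.mem_range] at ha hb
      rw [Sym2.eq_iff] at h
      rcases h with ⟨h1, h2⟩ | ⟨h1, h2⟩
      · exact hcastinj a ha b hb (hf.1 h1)
      · exfalso
        have e1 : (a : ZMod m) = (b : ZMod m) + 1 := hf.1 h1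
        have e2 : (b : ZMod m) = (a : ZMod m) + 1 := hf.1 h2.symm
        rw [e2, add_assoc] at e1
        have : ((2 : ℕ) : ZMod m) = ((0 : ℕ) : ZMod m) := by
          push_cast
          linear_combination -e1
        have := hcastinj 2 (by omega) 0 (by omega) this
        omega
    · -- not nil
      intro hnil
      have := congrArg Walk.length hnil
      rw [Walk.length_copy, ← Walk.length_edges, MMwalk_edges] at this
      simp at this
      omega
    · exact htail_nodup
  · intro a
    rw [htail]
    refine List.count_eq_one_of_mem ?_ ?_
    · rw [← htail]; exact htail_nodup
    · obtain ⟨i, rfl⟩ := hf.2 a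
      rw [List.mem_map]
      refine ⟨(i - 1).val, List.mem_range.2 (i-1).val_lt, ?_⟩
      rw [ZMod.natCast_val, ZMod.cast_id]
      ring_nf




lemma MMbase {n m : ℕ} (hn : 4 ≤ n) (hm : m = 2*n) (G : SimpleGraph (Fin n ⊕ Fin n))
    (hall : ∀ x y, G.Adj (Sum.inl x) (Sum.inr y)) :
    ∃ f : ZMod m → (Fin n ⊕ Fin n), Function.Bijective f ∧
      ∀ i, G.Adj (f i) (f (i+1)) := by
  have : NeZero m := ⟨by omega⟩
  refine ⟨fun i => if h : i.val % 2 = 0 then Sum.inl ⟨i.val / 2, by have := ZMod.val_lt i; omega⟩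
      else Sum.inr ⟨i.val / 2, by have := ZMod.val_lt i; omega⟩, ?_, ?_⟩
  · rw [Function.bijective_iff_has_inverse]
    refine ⟨fun v => Sum.elim (fun x : Fin n => ((2 * x.val : ℕ) : ZMod m))
      (fun y : Fin n => ((2 * y.val + 1 : ℕ) : ZMod m)) v, ?_, ?_⟩
    · intro i
      dsimp only
      by_cases h : i.val % 2 = 0
      · rw [dif_pos h]
        simp only [Sum.elim_inl]
        have e : 2 * (i.val / 2) = i.val := by omega
        rw [e, ZMod.natCast_val, ZMod.cast_id]
      · rw [dif_neg h]
        simp only [Sum.elim_inr]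
        have e : 2 * (i.val / 2) + 1 = i.val := by omega
        rw [e, ZMod.natCast_val, ZMod.cast_id]
    · rintro (x | y)
      · dsimp only [Sum.elim_inl]
        have hv : ((2 * x.val : ℕ) : ZMod m).val = 2 * x.val :=
          ZMod.val_cast_of_lt (by omega)
        rw [dif_pos (by rw [hv]; omega)]
        congr 1
        ext
        simp only [Fin.val_mk]
        omega
      · dsimp only [Sum.elim_inr]
        have hv : ((2 * y.val + 1 : ℕ) : ZMod m).val = 2 * y.val + 1 :=
          ZMod.val_cast_of_lt (by omega)
        rw [dif_neg (by rw [hv]; omega)]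
        congr 1
        ext
        simp only [Fin.val_mk]
        omega
  · intro i
    have hkm := ZMod.val_lt i
    have hval1 := MMval_add_one i (by omega)
    dsimp only
    by_cases h : i.val % 2 = 0
    · have h2 : i.val ≠ m - 1 := by omega
      have e2 : (i+1).val = i.val + 1 := by rw [hval1, if_neg h2]
      rw [dif_pos h, dif_neg (by omega)]
      exact hall _ _
    · by_cases h3 : i.val = m - 1
      · have e2 : (i+1).val = 0 := by rw [hval1, if_pos h3]
        rw [dif_neg h, dif_pos (by omega)]
        exact (hall _ _).symm
      · have e2 : (i+1).val = i.val + 1 := by rw [hval1, if_neg h3]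
        rw [dif_neg h, dif_pos (by omega)]
        exact (hall _ _).symm

lemma MMtwo_ne_zero {n : ℕ} (hn : 4 ≤ n) : ¬ ((2 : ZMod (2*n)) = 0) := by
  have : NeZero (2*n) := ⟨by omega⟩
  intro h
  have h2 : ((2:ℕ) : ZMod (2*n)) = ((0:ℕ) : ZMod (2*n)) := by push_cast; exact h
  have := MMcast_inj (a := 2) (b := 0) (by omega) (by omega) h2
  omega

lemma MMcastm1 {n : ℕ} (hn : 4 ≤ n) : ((2*n-1 : ℕ) : ZMod (2*n)) = -1 := by
  have : NeZero (2*n) := ⟨by omega⟩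
  rw [Nat.cast_sub (by omega), ZMod.natCast_self]
  push_cast
  ring













lemma MMstep (n : ℕ) (hn : 4 ≤ n) (k : ℕ) :
    ∀ (G : SimpleGraph (Fin n ⊕ Fin n)),
      G ≤ completeBipartiteGraph (Fin n) (Fin n) →
      (∀ x y, ¬ G.Adj (Sum.inl x) (Sum.inr y) →
        n + 1 ≤ (G.neighborSet (Sum.inl x)).ncard + (G.neighborSet (Sum.inr y)).ncard) →
      {q : Fin n × Fin n | ¬ G.Adj (Sum.inl q.1) (Sum.inr q.2)}.ncard ≤ k →
      ∃ f : ZMod (2*n) → (Fin n ⊕ Fin n), Function.Bijective f ∧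
        ∀ i, G.Adj (f i) (f (i+1)) := by
  have hNZ : NeZero (2*n) := ⟨by omega⟩
  induction k with
  | zero =>
    intro G hG hdeg hcount
    refine MMbase hn rfl G ?_
    intro x y
    by_contra hxy
    have hmem : (x, y) ∈ {q : Fin n × Fin n | ¬ G.Adj (Sum.inl q.1) (Sum.inr q.2)} := hxy
    have hpos : 0 < {q : Fin n × Fin n | ¬ G.Adj (Sum.inl q.1) (Sum.inr q.2)}.ncard :=
      (Set.ncard_pos (Set.toFinite _)).2 ⟨_, hmem⟩
    omega
  | succ k ih =>
    intro G hG hdeg hcount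
    by_cases hall : ∀ x y, G.Adj (Sum.inl x) (Sum.inr y)
    · exact MMbase hn rfl G hall
    push_neg at hall
    obtain ⟨x0, y0, hnadj⟩ := hall
    set G' := G ⊔ fromEdgeSet {s(Sum.inl x0, Sum.inr y0)} with hG'def
    have hle : G ≤ G' := le_sup_left
    have hadj' : ∀ a b, G'.Adj a b ↔
        G.Adj a b ∨ (s(a, b) = s(Sum.inl x0, Sum.inr y0) ∧ a ≠ b) := by
      intro a b
      rw [hG'def]
      simp [sup_adj, fromEdgeSet_adj]
    have hG'le : G' ≤ completeBipartiteGraph (Fin n) (Fin n) := by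
      intro a b hab
      rw [hadj'] at hab
      rcases hab with h | ⟨h, hne⟩
      · exact hG h
      · rw [Sym2.eq_iff] at h
        rcases h with ⟨rfl, rfl⟩ | ⟨rfl, rfl⟩ <;> simp [completeBipartiteGraph_adj]
    have hnbr : ∀ v, G.neighborSet v ⊆ G'.neighborSet v := fun v w h => hle h
    have hdeg' : ∀ x y, ¬ G'.Adj (Sum.inl x) (Sum.inr y) →
        n + 1 ≤ (G'.neighborSet (Sum.inl x)).ncard + (G'.neighborSet (Sum.inr y)).ncard := by
      intro x y hxy
      have hxy0 : ¬ G.Adj (Sum.inl x) (Sum.inr y) := fun h => hxy (hle h)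
      refine le_trans (hdeg x y hxy0) ?_
      exact add_le_add (Set.ncard_le_ncard (hnbr _) (Set.toFinite _))
        (Set.ncard_le_ncard (hnbr _) (Set.toFinite _))
    have hcount' : {q : Fin n × Fin n | ¬ G'.Adj (Sum.inl q.1) (Sum.inr q.2)}.ncard ≤ k := by
      have hssub : {q : Fin n × Fin n | ¬ G'.Adj (Sum.inl q.1) (Sum.inr q.2)}
          ⊂ {q : Fin n × Fin n | ¬ G.Adj (Sum.inl q.1) (Sum.inr q.2)} := by
        constructor
        · intro q hq
          exact fun h => hq (hle h)
        · intro hsub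
          have h1 : (x0, y0) ∈ {q : Fin n × Fin n | ¬ G.Adj (Sum.inl q.1) (Sum.inr q.2)} := hnadj
          have h2 := hsub h1
          have h3 : G'.Adj (Sum.inl x0) (Sum.inr y0) := by
            rw [hadj']
            exact Or.inr ⟨rfl, by simp⟩
          exact h2 h3
      have := Set.ncard_lt_ncard hssub (Set.toFinite _)
      omega
    obtain ⟨f, hbij, hadjf⟩ := ih G' hG'le hdeg' hcount'
    by_cases hok : ∀ i, G.Adj (f i) (f (i+1))
    · exact ⟨f, hbij, hok⟩
    push_neg at hok
    obtain ⟨i, hi⟩ := hok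
    have hsp : s(f i, f (i+1)) = s(Sum.inl x0, Sum.inr y0) := by
      have h1 := hadjf i
      rw [hadj'] at h1
      tauto
    have hdegp := hdeg x0 y0 hnadj
    rw [Sym2.eq_iff] at hsp
    -- helper : from casts
    have hzero : ∀ j : ℕ, j < 2*n → (j : ZMod (2*n)) = 0 → j = 0 := by
      intro j hj h
      have h2 : (j : ZMod (2*n)) = ((0:ℕ) : ZMod (2*n)) := by push_cast; exact h
      exact MMcast_inj hj (by omega) h2
    rcases hsp with ⟨hfi, hfi1⟩ | ⟨hfi, hfi1⟩
    · -- f i = inl x0, f (i+1) = inr y0 ; traverse backwards from i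
      set g : ZMod (2*n) → (Fin n ⊕ Fin n) := fun j => f (i - j) with hg
      have hginv : Function.Involutive (fun j : ZMod (2*n) => i - j) := by
        intro j; show i - (i - j) = j; ring
      have hgbij : Function.Bijective g := hbij.comp hginv.bijective
      have hg0 : g 0 = Sum.inl x0 := by rw [hg]; simpa using hfi
      have hglast : g ((2*n-1 : ℕ) : ZMod (2*n)) = Sum.inr y0 := by
        rw [hg]
        simp only
        rw [MMcastm1 hn, sub_neg_eq_add]
        exact hfi1
      refine MMcrossing hn rfl G hG x0 y0 hnadj hdegp g hgbij hg0 hglast ?_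
      intro j hj
      have hG'a : G'.Adj (g ((j+1 : ℕ) : ZMod (2*n))) (g (j : ZMod (2*n))) := by
        have h1 := hadjf (i - j - 1)
        rw [sub_add_cancel] at h1
        rw [hg]
        simp only
        push_cast
        rw [sub_add_eq_sub_sub]
        exact h1
      have hG'b := hG'a.symm
      rw [hadj'] at hG'b
      rcases hG'b with h | ⟨h, _⟩
      · exact h
      · exfalso
        rw [Sym2.eq_iff] at h
        rcases h with ⟨h1, h2⟩ | ⟨h1, h2⟩
        · -- g j = inl x0 = f i
          rw [hg] at h1 h2
          simp only at h1 h2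
          rw [← hfi] at h1
          have e1 : i - (j : ZMod (2*n)) = i := hbij.1 h1
          have e2 : (j : ZMod (2*n)) = 0 := by linear_combination -e1
          have e3 : j = 0 := hzero j (by omega) e2
          subst e3
          rw [← hfi1] at h2
          have e4 : i - ((0+1 : ℕ) : ZMod (2*n)) = i + 1 := hbij.1 h2
          have e5 : (2 : ZMod (2*n)) = 0 := by push_cast at e4; linear_combination -e4
          exact MMtwo_ne_zero hn e5
        · -- g j = inr y0 = f (i+1)
          rw [hg] at h1
          simp only at h1
          rw [← hfi1] at h1
          have e1 : i - (j : ZMod (2*n)) = i + 1 := hbij.1 h1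
          have e2 : ((j+1 : ℕ) : ZMod (2*n)) = 0 := by push_cast; linear_combination -e1
          have e3 : j + 1 = 0 := hzero (j+1) (by omega) e2
          omega
    · -- f i = inr y0, f (i+1) = inl x0 ; traverse forwards from i+1
      set g : ZMod (2*n) → (Fin n ⊕ Fin n) := fun j => f (i + 1 + j) with hg
      have hgbij : Function.Bijective g := hbij.comp (Equiv.addLeft (i+1 : ZMod (2*n))).bijective
      have hg0 : g 0 = Sum.inl x0 := by rw [hg]; simpa using hfi1
      have hglast : g ((2*n-1 : ℕ) : ZMod (2*n)) = Sum.inr y0 := by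
        rw [hg]
        simp only
        rw [MMcastm1 hn]
        rw [show i + 1 + -1 = i by ring]
        exact hfi
      refine MMcrossing hn rfl G hG x0 y0 hnadj hdegp g hgbij hg0 hglast ?_
      intro j hj
      have hG'a : G'.Adj (g (j : ZMod (2*n))) (g ((j+1 : ℕ) : ZMod (2*n))) := by
        have h1 := hadjf (i + 1 + j)
        rw [hg]
        simp only
        push_cast
        rw [show i + 1 + ((j : ZMod (2*n)) + 1) = i + 1 + j + 1 by ring]
        exact h1
      rw [hadj'] at hG'a
      rcases hG'a with h | ⟨h, _⟩
      · exact h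
      · exfalso
        rw [Sym2.eq_iff] at h
        rcases h with ⟨h1, h2⟩ | ⟨h1, h2⟩
        · rw [hg] at h1 h2
          simp only at h1 h2
          rw [← hfi1] at h1
          have e1 : i + 1 + (j : ZMod (2*n)) = i + 1 := hbij.1 h1
          have e2 : (j : ZMod (2*n)) = 0 := by linear_combination e1
          have e3 : j = 0 := hzero j (by omega) e2
          subst e3
          rw [← hfi] at h2
          have e4 : i + 1 + ((0+1 : ℕ) : ZMod (2*n)) = i := hbij.1 h2
          have e5 : (2 : ZMod (2*n)) = 0 := by push_cast at e4; linear_combination e4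
          exact MMtwo_ne_zero hn e5
        · rw [hg] at h1
          simp only at h1
          rw [← hfi] at h1
          have e1 : i + 1 + (j : ZMod (2*n)) = i := hbij.1 h1
          have e2 : ((j+1 : ℕ) : ZMod (2*n)) = 0 := by push_cast; linear_combination e1
          have e3 : j + 1 = 0 := hzero (j+1) (by omega) e2
          omega


/-- (Moon–Moser) Let `G` be bipartite with parts `X`, `Y` of equal size `n ≥ 4`. If
`deg x + deg y ≥ n + 1` for every nonadjacent pair `x ∈ X`, `y ∈ Y`, then `G` has a
Hamiltonian cycle. -/
theorem moon_moser (n : ℕ) (hn : 4 ≤ n)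
    (G : SimpleGraph (Fin n ⊕ Fin n))
    (hG : G ≤ completeBipartiteGraph (Fin n) (Fin n))
    (hdeg : ∀ (x y : Fin n), ¬ G.Adj (Sum.inl x) (Sum.inr y) →
      n + 1 ≤ (G.neighborSet (Sum.inl x)).ncard + (G.neighborSet (Sum.inr y)).ncard) :
    ∃ (v : Fin n ⊕ Fin n) (p : G.Walk v v), p.IsHamiltonianCycle := by
  obtain ⟨f, hbij, hadj⟩ := MMstep n hn
    ({q : Fin n × Fin n | ¬ G.Adj (Sum.inl q.1) (Sum.inr q.2)}.ncard) G hG hdeg (le_refl _)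
  exact hamSeq_to_cycle G (2*n) (by omega) f hbij hadj
end
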